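/- Define E : ℕ → ℝ by E(0)=0, E(1)=1, E(2)=0, and E(n) = (E(n-2)+E(n-3))/2 for n ≥ 3. Then for all n, |E(n) − 2/5| ≤ (3/5)·(1/√2)^{n-2} for n ≥ 2; in particular E(n) → 2/5. -/

import Mathlib

open Filter

theorem stmt_14 (E : ℕ → ℝ)
    (h0 : E 0 = 0) (h1 : E 1 = 1) (h2 : E 2 = 0)
    (hrec : ∀ n, 3 ≤ n → E n = (E (n - 2) + E (n - 3)) / 2) :
    (∀ n, 2 ≤ n → |E n - 2 / 5| ≤ (3 / 5) * (1 / Real.sqrt 2) ^ (n - 2)) ∧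
    Tendsto E atTop (nhds (2 / 5)) := by
  have h3 : E 3 = 1/2 := by rw [hrec 3 (by norm_num)]; norm_num [h0, h1]
  have h4 : E 4 = 1/2 := by rw [hrec 4 (by norm_num)]; norm_num [h1, h2]
  have h5 : E 5 = 1/4 := by rw [hrec 5 (by norm_num)]; norm_num [h2, h3]
  have h6 : E 6 = 1/2 := by rw [hrec 6 (by norm_num)]; norm_num [h3, h4]
  have key : ∀ n, E (n + 4) = -(E n) / 4 + 1/2 := by
    intro n
    induction n using Nat.strong_induction_on with
    | _ n ih =>
      match n, ih with
      | 0, _ => rw [show (0+4 : ℕ) = 4 from rfl, h4, h0]; norm_num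
      | 1, _ => rw [show (1+4 : ℕ) = 5 from rfl, h5, h1]; norm_num
      | 2, _ => rw [show (2+4 : ℕ) = 6 from rfl, h6, h2]; norm_num
      | (m+3), ih =>
        have e1 := hrec (m+3) (by omega)
        have e2 := hrec (m+7) (by omega)
        simp only [show m+3-2 = m+1 from rfl, show m+3-3 = m from rfl] at e1
        simp only [show m+7-2 = m+5 from rfl, show m+7-3 = m+4 from rfl] at e2
        have i1 := ih (m+1) (by omega)
        have i2 := ih m (by omega)
        rw [show m+1+4 = m+5 from rfl] at i1
        show E (m+7) = -(E (m+3)) / 4 + 1/2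
        rw [e2, e1, i1, i2]; ring
  have s2 : (0:ℝ) < Real.sqrt 2 := Real.sqrt_pos.2 (by norm_num)
  have ssq : Real.sqrt 2 ^ 2 = 2 := Real.sq_sqrt (by norm_num)
  have hs2 : Real.sqrt 2 ≤ 3/2 := by nlinarith [Real.sqrt_nonneg 2]
  have hc : (2/3 : ℝ) ≤ 1 / Real.sqrt 2 := by
    rw [le_div_iff₀ s2]; nlinarith
  have hc0 : (0:ℝ) ≤ 1 / Real.sqrt 2 := by positivity
  have c2 : (1 / Real.sqrt 2) ^ 2 = 1/2 := by
    rw [div_pow, ssq]; norm_num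
  have c4 : (1 / Real.sqrt 2) ^ 4 = 1/4 := by
    rw [show (4:ℕ) = 2+2 from rfl, pow_add, c2]; norm_num
  have bound : ∀ n, 2 ≤ n → |E n - 2/5| ≤ (3/5) * (1/Real.sqrt 2) ^ (n-2) := by
    intro n
    induction n using Nat.strong_induction_on with
    | _ n ih =>
      intro hn
      match n, ih, hn with
      | 2, _, _ =>
        rw [h2]; norm_num
      | 3, _, _ =>
        rw [h3]
        simp only [show (3:ℕ)-2 = 1 from rfl, pow_one]
        rw [show |(1:ℝ)/2 - 2/5| = 1/10 by rw [abs_of_nonneg] <;> norm_num]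
        linarith
      | 4, _, _ =>
        rw [h4]
        simp only [show (4:ℕ)-2 = 2 from rfl, c2]
        rw [show |(1:ℝ)/2 - 2/5| = 1/10 by rw [abs_of_nonneg] <;> norm_num]
        norm_num
      | 5, _, _ =>
        rw [h5]
        simp only [show (5:ℕ)-2 = 3 from rfl, show (3:ℕ) = 2+1 from rfl, pow_add, c2, pow_one]
        rw [show |(1:ℝ)/4 - 2/5| = 3/20 by rw [abs_of_nonpos] <;> norm_num]
        nlinarith
      | (m+6), ih, _ =>
        have i := ih (m+2) (by omega) (by omega)
        simp only [show m+2-2 = m from rfl] at i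
        have k := key (m+2)
        have hd : E (m+6) - 2/5 = -(E (m+2) - 2/5) / 4 := by
          rw [show m+6 = m+2+4 from rfl, k]; ring
        rw [hd, abs_div, abs_neg, show |(4:ℝ)| = 4 from by norm_num]
        simp only [show m+6-2 = m+4 from rfl, pow_add, c4]
        have hpm : (0:ℝ) ≤ (1/Real.sqrt 2)^m := by positivity
        nlinarith [abs_nonneg (E (m+2) - 2/5)]
  refine ⟨bound, ?_⟩
  have hlt1 : 1 / Real.sqrt 2 < 1 := by
    rw [div_lt_one s2]; nlinarith
  have t1 : Tendsto (fun n : ℕ => (1/Real.sqrt 2)^n) atTop (nhds 0) :=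
    tendsto_pow_atTop_nhds_zero_of_lt_one hc0 hlt1
  have t2 : Tendsto (fun n : ℕ => (3/5 : ℝ) * (1/Real.sqrt 2)^(n-2)) atTop (nhds 0) := by
    have := (t1.comp (tendsto_sub_atTop_nat 2)).const_mul (3/5 : ℝ)
    simpa using this
  have t3 : Tendsto (fun n => E n - 2/5) atTop (nhds 0) := by
    apply squeeze_zero_norm' _ t2
    filter_upwards [eventually_ge_atTop 2] with n hn
    simpa [Real.norm_eq_abs] using bound n hn
  have := t3.add_const (2/5 : ℝ)
  simpa using this
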